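/- For all integers k, k' ≥ 1, the direct product W(I₂(k)) × W(I₂(k')) of two dihedral groups (of orders 2k and 2k') is not a Beauville group. -/

import Mathlib

/-- `beauvilleSigma g h` is the set `Σ(g,h)`: the union over all integers `i` and all
`k` in the group of the conjugates `k⁻¹ gⁱ k`, `k⁻¹ hⁱ k` and `k⁻¹ (gh)ⁱ k`. -/
def beauvilleSigma {G : Type*} [Group G] (g h : G) : Set G :=
  {w | ∃ (i : ℤ) (k : G),
    w = k⁻¹ * g ^ i * k ∨ w = k⁻¹ * h ^ i * k ∨ w = k⁻¹ * (g * h) ^ i * k}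

/-- `{x₁,y₁}, {x₂,y₂}` is an (unmixed) Beauville structure on `G`:
both pairs generate `G` and `Σ(x₁,y₁) ∩ Σ(x₂,y₂) = {1}`. -/
def IsBeauvilleStructure {G : Type*} [Group G] (x₁ y₁ x₂ y₂ : G) : Prop :=
  Subgroup.closure {x₁, y₁} = ⊤ ∧ Subgroup.closure {x₂, y₂} = ⊤ ∧
    beauvilleSigma x₁ y₁ ∩ beauvilleSigma x₂ y₂ = {1}

/-- A group is a Beauville group if it admits a Beauville structure. -/
def IsBeauvilleGroup (G : Type*) [Group G] : Prop :=
  ∃ x₁ y₁ x₂ y₂ : G, IsBeauvilleStructure x₁ y₁ x₂ y₂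

/-- A group is a strongly real Beauville group if it admits a Beauville structure
`{x₁,y₁}, {x₂,y₂}` together with an automorphism `φ` and elements `g₁, g₂` such that
`gᵢ φ(xᵢ) gᵢ⁻¹ = xᵢ⁻¹` and `gᵢ φ(yᵢ) gᵢ⁻¹ = yᵢ⁻¹` for `i = 1, 2`. -/
def IsStronglyRealBeauvilleGroup (G : Type*) [Group G] : Prop :=
  ∃ x₁ y₁ x₂ y₂ : G, IsBeauvilleStructure x₁ y₁ x₂ y₂ ∧
    ∃ (φ : G ≃* G) (g₁ g₂ : G),
      g₁ * φ x₁ * g₁⁻¹ = x₁⁻¹ ∧ g₁ * φ y₁ * g₁⁻¹ = y₁⁻¹ ∧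
      g₂ * φ x₂ * g₂⁻¹ = x₂⁻¹ ∧ g₂ * φ y₂ * g₂⁻¹ = y₂⁻¹

namespace Stmt18Aux

open DihedralGroup

abbrev V2 := Multiplicative (ZMod 2)

instance : Fintype V2 := inferInstanceAs (Fintype (ZMod 2))
instance : DecidableEq V2 := inferInstanceAs (DecidableEq (ZMod 2))

/-- The hom sending rotations to `1` and reflections to `ofAdd 1`. -/
def par {n : ℕ} : DihedralGroup n →* V2 where
  toFun d := match d with
    | DihedralGroup.r _ => 1
    | DihedralGroup.sr _ => Multiplicative.ofAdd 1
  map_one' := rfl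
  map_mul' := by rintro (i|i) (j|j) <;> simp only [r_mul_r, r_mul_sr, sr_mul_r, sr_mul_sr] <;> rfl

@[simp] lemma par_r {n : ℕ} (i : ZMod n) : par (r i) = 1 := rfl
@[simp] lemma par_sr {n : ℕ} (i : ZMod n) : par (sr i) = Multiplicative.ofAdd 1 := rfl

/-- The rotation-parity function, for `n` even. -/
def rpf {n : ℕ} (h : 2 ∣ n) : DihedralGroup n → ZMod 2
  | DihedralGroup.r i => ZMod.castHom h (ZMod 2) i
  | DihedralGroup.sr i => ZMod.castHom h (ZMod 2) i

/-- The rotation-parity hom, for `n` even. -/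
def rotpar {n : ℕ} (h : 2 ∣ n) : DihedralGroup n →* V2 where
  toFun d := Multiplicative.ofAdd (rpf h d)
  map_one' := by
    show Multiplicative.ofAdd (rpf h (r 0)) = 1
    simp [rpf]
  map_mul' := by
    have key : ∀ u v : ZMod 2, v - u = u + v := by decide
    rintro (i|i) (j|j) <;>
      simp only [r_mul_r, r_mul_sr, sr_mul_r, sr_mul_sr] <;>
      show Multiplicative.ofAdd _ = Multiplicative.ofAdd _ * Multiplicative.ofAdd _ <;>
      rw [← ofAdd_add] <;>
      simp only [rpf, map_add, map_sub, key]

@[simp] lemma rotpar_r {n : ℕ} (h : 2 ∣ n) (i : ZMod n) :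
    rotpar h (r i) = Multiplicative.ofAdd (ZMod.castHom h (ZMod 2) i) := rfl
@[simp] lemma rotpar_sr {n : ℕ} (h : 2 ∣ n) (i : ZMod n) :
    rotpar h (sr i) = Multiplicative.ofAdd (ZMod.castHom h (ZMod 2) i) := rfl

lemma zpow_cases {G : Type*} [Group G] (A : G) (hA : A * A = 1) (m : ℤ) :
    A ^ m = 1 ∨ A ^ m = A := by
  have h2 : A ^ (2 : ℤ) = 1 := by
    rw [show (2:ℤ) = 1 + 1 by ring, zpow_add, zpow_one, hA]
  have hm : A ^ m = A ^ (m % 2) := by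
    conv_lhs => rw [← Int.emod_add_mul_ediv m 2]
    rw [zpow_add, zpow_mul, h2, one_zpow, mul_one]
  rcases Int.emod_two_eq_zero_or_one m with h | h <;> rw [hm, h]
  · exact Or.inl (zpow_zero A)
  · exact Or.inr (zpow_one A)

/-- If `k` is even, `D_k × D_{k'}` is not 2-generated. -/
lemma not_top_of_even {k k' : ℕ} (h2 : 2 ∣ k) (x y : DihedralGroup k × DihedralGroup k') :
    Subgroup.closure ({x, y} : Set (DihedralGroup k × DihedralGroup k')) ≠ ⊤ := by
  intro hT
  let F : DihedralGroup k × DihedralGroup k' →* V2 × V2 × V2 :=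
    ((rotpar h2).comp (MonoidHom.fst _ _)).prod
      ((par.comp (MonoidHom.fst _ _)).prod (par.comp (MonoidHom.snd _ _)))
  have hF : ∀ z : DihedralGroup k × DihedralGroup k',
      F z = (rotpar h2 z.1, par z.1, par z.2) := fun z => rfl
  have hsurj : Function.Surjective F := by
    rintro ⟨a, b, c⟩
    have ha : a = 1 ∨ a = Multiplicative.ofAdd 1 := by revert a; decide
    have hb : b = 1 ∨ b = Multiplicative.ofAdd 1 := by revert b; decide
    have hc : c = 1 ∨ c = Multiplicative.ofAdd 1 := by revert c; decide
    rcases ha with rfl | rfl <;> rcases hb with rfl | rfl <;> rcases hc with rfl | rfl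
    · exact ⟨(r 0, r 0), by simp [hF, ZMod.cast_one h2]⟩
    · exact ⟨(r 0, sr 0), by simp [hF, ZMod.cast_one h2]⟩
    · exact ⟨(sr 0, r 0), by simp [hF, ZMod.cast_one h2]⟩
    · exact ⟨(sr 0, sr 0), by simp [hF, ZMod.cast_one h2]⟩
    · exact ⟨(r 1, r 0), by simp [hF, ZMod.cast_one h2]⟩
    · exact ⟨(r 1, sr 0), by simp [hF, ZMod.cast_one h2]⟩
    · exact ⟨(sr 1, r 0), by simp [hF, ZMod.cast_one h2]⟩
    · exact ⟨(sr 1, sr 0), by simp [hF, ZMod.cast_one h2]⟩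
  have htop : Subgroup.closure ({F x, F y} : Set (V2 × V2 × V2)) = ⊤ := by
    rw [← Set.image_pair, ← MonoidHom.map_closure, hT,
      Subgroup.map_top_of_surjective F hsurj]
  obtain ⟨z, hz1, hz2, hz3, hz4⟩ :
      ∃ z : V2 × V2 × V2, z ≠ 1 ∧ z ≠ F x ∧ z ≠ F y ∧ z ≠ F x * F y := by
    have : ∀ A B : V2 × V2 × V2, ∃ z : V2 × V2 × V2,
        z ≠ 1 ∧ z ≠ A ∧ z ≠ B ∧ z ≠ A * B := by decide
    exact this (F x) (F y)
  have hz : z ∈ Subgroup.closure ({F x, F y} : Set (V2 × V2 × V2)) :=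
    htop ▸ Subgroup.mem_top z
  rw [Subgroup.mem_closure_pair] at hz
  obtain ⟨m, n, hmn⟩ := hz
  have hsq : ∀ A : V2 × V2 × V2, A * A = 1 := by decide
  rcases zpow_cases (F x) (hsq _) m with h | h <;>
    rcases zpow_cases (F y) (hsq _) n with h' | h' <;>
    rw [h, h'] at hmn <;> (try simp only [one_mul, mul_one] at hmn)
  · exact hz1 hmn.symm
  · exact hz3 hmn.symm
  · exact hz2 hmn.symm
  · exact hz4 hmn.symm

/-- From a generating pair, one of `x`, `y`, `x*y` is a pair of reflections. -/
lemma exists_srsr {k k' : ℕ} {x y : DihedralGroup k × DihedralGroup k'}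
    (hT : Subgroup.closure ({x, y} : Set (DihedralGroup k × DihedralGroup k')) = ⊤) :
    ∃ u, (u = x ∨ u = y ∨ u = x * y) ∧ ∃ a b, u = (sr a, sr b) := by
  classical
  let π : DihedralGroup k × DihedralGroup k' →* V2 × V2 :=
    (par.comp (MonoidHom.fst _ _)).prod (par.comp (MonoidHom.snd _ _))
  have hπ : ∀ z : DihedralGroup k × DihedralGroup k',
      π z = (par z.1, par z.2) := fun z => rfl
  have hss : ∀ z : DihedralGroup k × DihedralGroup k',
      π z = (Multiplicative.ofAdd 1, Multiplicative.ofAdd 1) → ∃ a b, z = (sr a, sr b) := by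
    rintro ⟨(i|i), (j|j)⟩ hz
    · rw [hπ] at hz; simp only [par_r, Prod.mk.injEq] at hz
      exact absurd hz.1 (by decide)
    · rw [hπ] at hz; simp only [par_r, par_sr, Prod.mk.injEq] at hz
      exact absurd hz.1 (by decide)
    · rw [hπ] at hz; simp only [par_r, par_sr, Prod.mk.injEq] at hz
      exact absurd hz.2 (by decide)
    · exact ⟨i, j, rfl⟩
  by_cases hx : π x = (Multiplicative.ofAdd 1, Multiplicative.ofAdd 1)
  · exact ⟨x, Or.inl rfl, hss x hx⟩
  by_cases hy : π y = (Multiplicative.ofAdd 1, Multiplicative.ofAdd 1)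
  · exact ⟨y, Or.inr (Or.inl rfl), hss y hy⟩
  by_cases hxy : π (x * y) = (Multiplicative.ofAdd 1, Multiplicative.ofAdd 1)
  · exact ⟨x * y, Or.inr (Or.inr rfl), hss _ hxy⟩
  exfalso
  have key : ∀ A B : V2 × V2,
      A ≠ (Multiplicative.ofAdd 1, Multiplicative.ofAdd 1) →
      B ≠ (Multiplicative.ofAdd 1, Multiplicative.ofAdd 1) →
      A * B ≠ (Multiplicative.ofAdd 1, Multiplicative.ofAdd 1) →
      (A.1 = 1 ∧ B.1 = 1) ∨ (A.2 = 1 ∧ B.2 = 1) := by decide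
  have hxy' : π x * π y ≠ (Multiplicative.ofAdd 1, Multiplicative.ofAdd 1) := by
    rw [← map_mul]; exact hxy
  rcases key _ _ hx hy hxy' with ⟨h1, hh2⟩ | ⟨h1, hh2⟩
  · have hle : Subgroup.closure ({x, y} : Set (DihedralGroup k × DihedralGroup k')) ≤
        ((par.comp (MonoidHom.fst (DihedralGroup k) (DihedralGroup k'))).ker) := by
      rw [Subgroup.closure_le]
      rintro z hz
      rcases hz with rfl | hz
      · exact h1
      · rcases hz with rfl; exact hh2
    rw [hT] at hle
    have := hle (Subgroup.mem_top (sr 0, 1))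
    rw [MonoidHom.mem_ker] at this
    simp only [MonoidHom.comp_apply, MonoidHom.coe_fst, par_sr] at this
    exact absurd this (by decide)
  · have hle : Subgroup.closure ({x, y} : Set (DihedralGroup k × DihedralGroup k')) ≤
        ((par.comp (MonoidHom.snd (DihedralGroup k) (DihedralGroup k'))).ker) := by
      rw [Subgroup.closure_le]
      rintro z hz
      rcases hz with rfl | hz
      · exact h1
      · rcases hz with rfl; exact hh2
    rw [hT] at hle
    have := hle (Subgroup.mem_top (1, sr 0))
    rw [MonoidHom.mem_ker] at this
    simp only [MonoidHom.comp_apply, MonoidHom.coe_snd, par_sr] at this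
    exact absurd this (by decide)

/-- For odd `n`, any two reflections are conjugate. -/
lemma conj_sr {n : ℕ} (h2 : ¬ 2 ∣ n) (a a' : ZMod n) :
    ∃ m : ZMod n, (r m)⁻¹ * sr a * r m = sr a' := by
  have hc : Nat.Coprime 2 n := (Nat.prime_two.coprime_iff_not_dvd).mpr h2
  set u : (ZMod n)ˣ := ZMod.unitOfCoprime 2 hc with hu
  refine ⟨(↑u⁻¹ : ZMod n) * (a' - a), ?_⟩
  set m : ZMod n := (↑u⁻¹ : ZMod n) * (a' - a) with hm
  have h1 : (r m)⁻¹ * sr a * r m = sr (a + m + m) := by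
    rw [show (r m)⁻¹ = r (-m) from rfl, r_mul_sr, sr_mul_r, sub_neg_eq_add]
  rw [h1]
  congr 1
  have hcoe : (↑u : ZMod n) = 2 := by
    rw [hu, ZMod.coe_unitOfCoprime]; push_cast; ring
  have : m + m = a' - a := by
    calc m + m = (↑u : ZMod n) * ((↑u⁻¹ : ZMod n) * (a' - a)) := by rw [hcoe, hm]; ring
    _ = ((↑u : ZMod n) * (↑u⁻¹ : ZMod n)) * (a' - a) := by ring
    _ = a' - a := by rw [← Units.val_mul, mul_inv_cancel, Units.val_one, one_mul]
  rw [add_assoc, this]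
  ring

end Stmt18Aux

open Stmt18Aux DihedralGroup

/-- For all integers `k, k' ≥ 1`, the direct product of the dihedral groups of orders
`2k` and `2k'` (the Coxeter groups of types `I₂(k)` and `I₂(k')`) is not a Beauville
group. -/
theorem stmt_18 (k k' : ℕ) (hk : 1 ≤ k) (hk' : 1 ≤ k') :
    ¬ IsBeauvilleGroup (DihedralGroup k × DihedralGroup k') := by
  rintro ⟨x₁, y₁, x₂, y₂, hgen₁, hgen₂, hint⟩
  by_cases h2 : 2 ∣ k
  · exact not_top_of_even h2 x₁ y₁ hgen₁
  by_cases h2' : 2 ∣ k'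
  · set e : DihedralGroup k × DihedralGroup k' ≃* DihedralGroup k' × DihedralGroup k :=
      MulEquiv.prodComm
    apply not_top_of_even h2' (e x₁) (e y₁)
    have h := MonoidHom.map_closure e.toMonoidHom {x₁, y₁}
    rw [Set.image_pair, hgen₁, Subgroup.map_top_of_surjective _ e.surjective] at h
    simpa using h.symm
  -- both odd
  obtain ⟨u₁, hu₁, a₁, b₁, hab₁⟩ := exists_srsr hgen₁
  obtain ⟨u₂, hu₂, a₂, b₂, hab₂⟩ := exists_srsr hgen₂
  obtain ⟨m, hm⟩ := conj_sr h2 a₁ a₂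
  obtain ⟨m', hm'⟩ := conj_sr h2' b₁ b₂
  have hconj : ((r m, r m') : DihedralGroup k × DihedralGroup k')⁻¹ * u₁ * (r m, r m') = u₂ := by
    rw [hab₁, hab₂]
    exact Prod.ext hm hm'
  have hw1 : u₂ ∈ beauvilleSigma x₁ y₁ := by
    refine ⟨1, (r m, r m'), ?_⟩
    rcases hu₁ with rfl | rfl | rfl
    · exact Or.inl (by rw [zpow_one, hconj])
    · exact Or.inr (Or.inl (by rw [zpow_one, hconj]))
    · exact Or.inr (Or.inr (by rw [zpow_one, hconj]))
  have hw2 : u₂ ∈ beauvilleSigma x₂ y₂ := by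
    refine ⟨1, 1, ?_⟩
    rcases hu₂ with rfl | rfl | rfl
    · exact Or.inl (by simp)
    · exact Or.inr (Or.inl (by simp))
    · exact Or.inr (Or.inr (by simp))
  have : u₂ = 1 := by
    have hmem : u₂ ∈ beauvilleSigma x₁ y₁ ∩ beauvilleSigma x₂ y₂ := ⟨hw1, hw2⟩
    rw [hint] at hmem
    exact hmem
  rw [hab₂, Prod.ext_iff] at this
  exact absurd this.1 (by simp [one_def, -r_zero])
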